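/- Let q be a prime power and d ≥ 3, and set m_i = (q^i−1)/(q−1). Let ℋ be the set of hyperplanes of a d-dimensional 𝔽_q-space U, so |ℋ| = m_d. Then m_d! / |PΓL(U)|^2 > (q^{d−2})! whenever (d,q) ≠ (3,2), where |PΓL(U)| = e·|PGL(d,q)| ≤ e·q^{d^2} with q = p^e. More precisely: with N = |PΓL_d(q)|, one has m_d!/N^2 > (q^{d-2})! for all prime powers q and d ≥ 3 with (d,q) ≠ (3,2). -/

import Mathlib

open Finset

lemma factA (a : ℕ) : ∀ n, a ≤ n → a.factorial * (a+1)^(n-a) ≤ n.factorial := by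
  intro n
  induction n with
  | zero =>
    intro h
    have : a = 0 := by omega
    subst this; simp
  | succ n ih =>
    intro h
    rcases Nat.lt_or_ge a (n+1) with h' | h'
    · have ha : a ≤ n := by omega
      have he : n + 1 - a = (n - a) + 1 := by omega
      rw [he, pow_succ, Nat.factorial_succ]
      calc a.factorial * ((a+1)^(n-a) * (a+1))
          = (a.factorial * (a+1)^(n-a)) * (a+1) := by ring
        _ ≤ n.factorial * (a+1) := Nat.mul_le_mul_right _ (ih ha)
        _ ≤ n.factorial * (n+1) := Nat.mul_le_mul_left _ (by omega)
        _ = (n+1) * n.factorial := by ring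
    · have : a = n+1 := by omega
      subst this; simp

lemma geomsum (q : ℕ) (hq : 1 ≤ q) : ∀ n, (q - 1) * ∑ i ∈ range n, q^i = q^n - 1 := by
  intro n
  induction n with
  | zero => simp
  | succ n ih =>
    rw [Finset.sum_range_succ, Nat.mul_add, ih]
    have h1 : 1 ≤ q^n := Nat.one_le_pow _ _ (by omega)
    have h3 : q^(n+1) = q * q^n := by ring
    have h4 : (q-1) * q^n + q^n = q * q^n := by
      rcases q with _ | m
      · omega
      · simp only [Nat.succ_sub_one]; ring
    omega

lemma m_eq (q d : ℕ) (hq : 2 ≤ q) : (q^d - 1) / (q - 1) = ∑ i ∈ range d, q^i :=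
  Nat.div_eq_of_eq_mul_left (by omega)
    (by rw [← geomsum q (by omega) d]; ring)

lemma m_lb (q d : ℕ) (hq : 2 ≤ q) (hd : 3 ≤ d) :
    q^(d-1) + q^(d-2) + 1 ≤ (q^d - 1) / (q - 1) := by
  rw [m_eq q d hq]
  obtain ⟨k, rfl⟩ := Nat.exists_eq_add_of_le hd
  have h1 : (1:ℕ) ≤ ∑ i ∈ range (1 + k), q^i := by
    calc (1:ℕ) = q^0 := by simp
    _ ≤ ∑ i ∈ range (1+k), q^i :=
      Finset.single_le_sum (fun i _ => Nat.zero_le _) (Finset.mem_range.mpr (by omega))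
  have e1 : 3 + k = (1 + k) + 1 + 1 := by omega
  rw [e1, Finset.sum_range_succ, Finset.sum_range_succ]
  have e2 : (1+k)+1+1-1 = (1+k)+1 := by omega
  have e3 : (1+k)+1+1-2 = 1+k := by omega
  rw [e2, e3]
  omega

lemma keyE (d : ℕ) (hd : 5 ≤ d) : 2*(d*d) ≤ (d-2) * (2^(d-1)+1) := by
  induction d, hd using Nat.le_induction with
  | base => norm_num
  | succ n hn ih =>
    have hP : 16 ≤ 2^(n-1) := by
      calc (16:ℕ) = 2^4 := by norm_num
      _ ≤ 2^(n-1) := Nat.pow_le_pow_right (by norm_num) (by omega)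
    have h2 : 2^(n+1-1) = 2 * 2^(n-1) := by
      have hn1 : n+1-1 = (n-1)+1 := by omega
      rw [hn1, pow_succ]; ring
    rw [h2]
    obtain ⟨k, rfl⟩ := Nat.exists_eq_add_of_le hn
    have e1 : 5 + k + 1 - 2 = 4 + k := by omega
    have e2 : 5 + k - 2 = 3 + k := by omega
    rw [e1]
    rw [e2] at ih
    set P := 2^(5 + k - 1) with hPdef
    nlinarith [hP, ih, sq_nonneg k, Nat.zero_le k]

lemma key (d q : ℕ) (hd : 3 ≤ d) (hq : 2 ≤ q) (h3 : d = 3 → 5 ≤ q) (h4 : d = 4 → 3 ≤ q) :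
    2*(d*d) ≤ (d-2) * (q^(d-1) + 1) := by
  by_cases hd3 : d = 3
  · subst hd3
    have h5 := h3 rfl
    have h25 : (25:ℕ) ≤ q^2 := by
      calc (25:ℕ) = 5^2 := by norm_num
      _ ≤ q^2 := Nat.pow_le_pow_left h5 2
    norm_num
    omega
  · by_cases hd4 : d = 4
    · subst hd4
      have h33 := h4 rfl
      have h27 : (27:ℕ) ≤ q^3 := by
        calc (27:ℕ) = 3^3 := by norm_num
        _ ≤ q^3 := Nat.pow_le_pow_left h33 3
      norm_num
      omega
    · have hd5 : 5 ≤ d := by omega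
      have hpow : 2^(d-1) ≤ q^(d-1) := Nat.pow_le_pow_left hq _
      calc 2*(d*d) ≤ (d-2) * (2^(d-1)+1) := keyE d hd5
      _ ≤ (d-2) * (q^(d-1)+1) := Nat.mul_le_mul_left _ (by omega)

lemma expo (d : ℕ) (hd : 3 ≤ d) : 1 + d*(d-1)/2 + ∑ i ∈ Finset.Icc 2 d, i = d*d := by
  have hI : Finset.Icc 2 d = Finset.Ico 2 (d+1) := (Finset.Ico_add_one_right_eq_Icc 2 d).symm
  have hsplit : ∑ i ∈ Finset.Ico 0 2, i + ∑ i ∈ Finset.Ico 2 (d+1), i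
      = ∑ i ∈ Finset.Ico 0 (d+1), i :=
    Finset.sum_Ico_consecutive _ (by omega) (by omega)
  have hg : (∑ i ∈ Finset.Ico 0 (d+1), i) * 2 = (d+1) * d := by
    rw [← Finset.range_eq_Ico, Finset.sum_range_id_mul_two]; simp
  have h02 : ∑ i ∈ Finset.Ico 0 2, i = 1 := rfl
  have heven : 2 ∣ d * (d-1) := by
    rcases Nat.even_or_odd d with h | h
    · exact Dvd.dvd.mul_right h.two_dvd _
    · exact Dvd.dvd.mul_left (Nat.Odd.sub_odd h odd_one).two_dvd _
  have hT : d*(d-1)/2 * 2 = d*(d-1) := Nat.div_mul_cancel heven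
  have hdd : d*(d-1) + d = d*d := by
    rcases d with _ | m
    · omega
    · simp only [Nat.succ_sub_one]; ring
  have hdd2 : (d+1)*d = d*d + d := by ring
  rw [hI]
  omega

/-- Counting step of Theorem 7.9: with `q = p^e` a prime power, `d ≥ 3`,
`m_d = (q^d−1)/(q−1)` the number of hyperplanes of `PG(d−1,q)`, and
`N = |PΓL_d(q)| = e·q^{d(d−1)/2}·∏_{i=2}^d (q^i−1)`, one has
`m_d! / N² > (q^{d−2})!`, i.e. `N² · (q^{d−2})! < m_d!`, whenever `(d,q) ≠ (3,2)`. -/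
theorem stmt16 (p e d : ℕ) (hp : p.Prime) (he : 1 ≤ e) (hd : 3 ≤ d)
    (q : ℕ) (hq : q = p ^ e) (hne : ¬(d = 3 ∧ q = 2))
    (N : ℕ) (hN : N = e * q ^ (d * (d - 1) / 2) * ∏ i ∈ Finset.Icc 2 d, (q ^ i - 1)) :
    N ^ 2 * Nat.factorial (q ^ (d - 2)) < Nat.factorial ((q ^ d - 1) / (q - 1)) := by
  have hq2 : 2 ≤ q := by
    rw [hq]
    calc 2 = 2^1 := rfl
    _ ≤ p^1 := Nat.pow_le_pow_left hp.two_le 1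
    _ ≤ p^e := Nat.pow_le_pow_right (by have := hp.two_le; omega) he
  have h2e : 2^e ≤ q := hq ▸ Nat.pow_le_pow_left hp.two_le e
  have heq : e ≤ q := le_trans (Nat.le_of_lt (Nat.lt_two_pow_self (n := e))) h2e
  by_cases hc1 : d = 3 ∧ q = 3
  · obtain ⟨rfl, rfl⟩ := hc1
    have he1 : e = 1 := by
      by_contra h
      have h4 : (4:ℕ) ≤ 2^e := by
        calc (4:ℕ) = 2^2 := rfl
        _ ≤ 2^e := Nat.pow_le_pow_right (by norm_num) (by omega)
      omega
    subst he1
    subst hN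
    decide
  · by_cases hc2 : d = 3 ∧ q = 4
    · obtain ⟨rfl, rfl⟩ := hc2
      have he2 : e ≤ 2 := by
        by_contra h
        have h8 : (8:ℕ) ≤ 2^e := by
          calc (8:ℕ) = 2^3 := rfl
          _ ≤ 2^e := Nat.pow_le_pow_right (by norm_num) (by omega)
        omega
      have hNle : N ≤ 120960 := by
        rw [hN]
        have hprod : (∏ i ∈ Finset.Icc 2 3, (4^i - 1)) = 945 := by decide
        rw [hprod]
        calc e * 4 ^ (3 * (3-1) / 2) * 945 ≤ 2 * 4 ^ (3 * (3-1) / 2) * 945 := by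
              apply Nat.mul_le_mul_right
              exact Nat.mul_le_mul_right _ he2
        _ = 120960 := by norm_num
      calc N ^ 2 * Nat.factorial (4 ^ (3-2))
          ≤ 120960 ^ 2 * Nat.factorial (4 ^ (3-2)) := by
            apply Nat.mul_le_mul_right
            exact Nat.pow_le_pow_left hNle 2
        _ < Nat.factorial ((4^3 - 1) / (4 - 1)) := by decide
    · by_cases hc3 : d = 4 ∧ q = 2
      · obtain ⟨rfl, rfl⟩ := hc3
        have he1 : e = 1 := by
          by_contra h
          have h4 : (4:ℕ) ≤ 2^e := by
            calc (4:ℕ) = 2^2 := rfl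
            _ ≤ 2^e := Nat.pow_le_pow_right (by norm_num) (by omega)
          omega
        subst he1
        subst hN
        decide
      · -- general case
        have h3q : d = 3 → 5 ≤ q := by omega
        have h4q : d = 4 → 3 ≤ q := by omega
        have hkey := key d q hd hq2 h3q h4q
        have hmlb := m_lb q d hq2 hd
        set a := q^(d-2) with ha
        set m := (q^d - 1) / (q - 1) with hm
        have ham : a ≤ m := by omega
        have hs : q^(d-1) + 1 ≤ m - a := by omega
        have hP : (∏ i ∈ Finset.Icc 2 d, (q^i - 1)) ≤ q^(∑ i ∈ Finset.Icc 2 d, i) := by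
          calc (∏ i ∈ Finset.Icc 2 d, (q^i - 1)) ≤ ∏ i ∈ Finset.Icc 2 d, q^i :=
              Finset.prod_le_prod (fun i _ => Nat.zero_le _) (fun i _ => Nat.sub_le _ _)
          _ = q^(∑ i ∈ Finset.Icc 2 d, i) := Finset.prod_pow_eq_pow_sum _ _ _
        have hNle : N ≤ q^(d*d) := by
          rw [hN]
          calc e * q^(d*(d-1)/2) * ∏ i ∈ Finset.Icc 2 d, (q^i - 1)
              ≤ q * q^(d*(d-1)/2) * q^(∑ i ∈ Finset.Icc 2 d, i) :=
                Nat.mul_le_mul (Nat.mul_le_mul_right _ heq) hP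
          _ = q^(1 + d*(d-1)/2 + ∑ i ∈ Finset.Icc 2 d, i) := by
                rw [pow_add, pow_add, pow_one]
          _ = q^(d*d) := by rw [expo d hd]
        have hexp : 2*(d*d) ≤ (d-2)*(m-a) :=
          le_trans hkey (Nat.mul_le_mul_left _ hs)
        have hfactpos : 0 < a.factorial := Nat.factorial_pos a
        calc N ^ 2 * a.factorial
            ≤ (q^(d*d)) ^ 2 * a.factorial :=
              Nat.mul_le_mul_right _ (Nat.pow_le_pow_left hNle 2)
          _ = q^(2*(d*d)) * a.factorial := by rw [← pow_mul, Nat.mul_comm (d*d) 2]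
          _ ≤ q^((d-2)*(m-a)) * a.factorial :=
              Nat.mul_le_mul_right _ (Nat.pow_le_pow_right (by omega) hexp)
          _ = (q^(d-2))^(m-a) * a.factorial := by rw [pow_mul]
          _ < (a+1)^(m-a) * a.factorial := by
              have hlt : (q^(d-2))^(m-a) < (a+1)^(m-a) :=
                Nat.pow_lt_pow_left (by omega) (by omega)
              exact Nat.mul_lt_mul_of_lt_of_le hlt le_rfl hfactpos
          _ ≤ m.factorial := by
              rw [Nat.mul_comm]
              exact factA a m ham
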